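/- Let w > −1, t₀ ∈ ℝ, T > −t₀, and let D, a₀ > 0 and C, Λ, R⋆ ∈ ℝ. Define F : (0,∞) → ℝ by F(x) = D·a₀^{3w}·x^{−(3w+1)} − R⋆/6 + (Λ/3)x² − (C/6)x⁴. Let a : [−t₀, T) → ℝ be continuous with a(−t₀) = 0, differentiable on (−t₀, T) with a(t) > 0 and a'(t) > 0 there, and satisfying a'(t)² = F(a(t)) for all t ∈ (−t₀, T). Then for every t ∈ (−t₀, T), t + t₀ = ∫₀^{a(t)} F(x)^{−1/2} dx (the integral being finite). -/

import Mathlib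

/-- Formal integration of the modified Friedmann equation `ȧ² = F(a)` with
`F(x) = D a₀^{3w} x^{-(3w+1)} - R⋆/6 + (Λ/3)x² - (C/6)x⁴` and initial condition `a(-t₀) = 0`:
for every `t`, `t + t₀ = ∫₀^{a(t)} F(x)^{-1/2} dx`, the integral being finite. -/
theorem friedmann_formal_integration
    (w t₀ T D a₀ C Λ Rstar : ℝ)
    (hw : w > -1) (hT : T > -t₀) (hD : D > 0) (ha₀ : a₀ > 0)
    (F : ℝ → ℝ)
    (hF : ∀ x ∈ Set.Ioi (0:ℝ), F x
      = D * a₀ ^ (3*w) * x ^ (-(3*w+1)) - Rstar/6 + (Λ/3) * x ^ 2 - (C/6) * x ^ 4)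
    (a a' : ℝ → ℝ)
    (hacont : ContinuousOn a (Set.Ico (-t₀) T))
    (ha0 : a (-t₀) = 0)
    (hderiv : ∀ t ∈ Set.Ioo (-t₀) T, HasDerivAt a (a' t) t)
    (hapos : ∀ t ∈ Set.Ioo (-t₀) T, a t > 0)
    (ha'pos : ∀ t ∈ Set.Ioo (-t₀) T, a' t > 0)
    (hODE : ∀ t ∈ Set.Ioo (-t₀) T, (a' t) ^ 2 = F (a t)) :
    ∀ t ∈ Set.Ioo (-t₀) T,
      MeasureTheory.IntegrableOn (fun x => F x ^ (-(1:ℝ)/2)) (Set.Ioc 0 (a t)) ∧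
      t + t₀ = ∫ x in (0:ℝ)..(a t), F x ^ (-(1:ℝ)/2) := by
  intro t ht
  set f : ℝ → ℝ := fun x => F x ^ (-(1:ℝ)/2) with hf_def
  set B : ℝ := a t with hB_def
  have hB : 0 < B := hapos t ht
  have hIccsub : Set.Icc (-t₀) t ⊆ Set.Ico (-t₀) T :=
    fun u hu => ⟨hu.1, lt_of_le_of_lt hu.2 ht.2⟩
  have hacontt : ContinuousOn a (Set.Icc (-t₀) t) := hacont.mono hIccsub
  -- strict monotonicity of a on Icc (-t₀) t
  have hmono : StrictMonoOn a (Set.Icc (-t₀) t) := by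
    apply strictMonoOn_of_deriv_pos (convex_Icc _ _) hacontt
    intro x hx
    rw [interior_Icc] at hx
    have hx' : x ∈ Set.Ioo (-t₀) T := ⟨hx.1, hx.2.trans ht.2⟩
    rw [(hderiv x hx').deriv]
    exact ha'pos x hx'
  -- positivity of F on Ioc 0 B
  have hFpos : ∀ x ∈ Set.Ioc (0:ℝ) B, 0 < F x := by
    intro x hx
    have hx' : x ∈ Set.Ioc (a (-t₀)) (a t) := by rw [ha0]; exact hx
    obtain ⟨u, hu, hux⟩ := intermediate_value_Ioc ht.1.le hacontt hx'
    have hu' : u ∈ Set.Ioo (-t₀) T := ⟨hu.1, lt_of_le_of_lt hu.2 ht.2⟩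
    rw [← hux, ← hODE u hu']
    exact pow_pos (ha'pos u hu') 2
  -- continuity of F on Ioi 0
  have hFcont : ContinuousOn F (Set.Ioi (0:ℝ)) := by
    have h1 : ContinuousOn
        (fun x : ℝ => D * a₀ ^ (3*w) * x ^ (-(3*w+1)) - Rstar/6 + (Λ/3) * x ^ 2 - (C/6) * x ^ 4)
        (Set.Ioi (0:ℝ)) := by
      apply ContinuousOn.sub
      apply ContinuousOn.add
      apply ContinuousOn.sub
      · exact continuousOn_const.mul
          (continuousOn_id.rpow_const (fun x hx => Or.inl (ne_of_gt hx)))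
      · exact continuousOn_const
      · exact continuousOn_const.mul (continuousOn_pow 2)
      · exact continuousOn_const.mul (continuousOn_pow 4)
    exact h1.congr hF
  have ha'eq : ∀ u ∈ Set.Ioo (-t₀) T, a' u = Real.sqrt (F (a u)) := by
    intro u hu
    rw [← hODE u hu, Real.sqrt_sq (ha'pos u hu).le]
  -- key substitution formula
  have key : ∀ s ∈ Set.Ioo (-t₀) t, ∫ x in (a s)..B, f x = t - s := by
    intro s hs
    have hst : s ≤ t := hs.2.le
    have hsub : Set.uIcc s t = Set.Icc s t := Set.uIcc_of_le hst
    have hmem : ∀ u ∈ Set.Icc s t, u ∈ Set.Ioo (-t₀) T :=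
      fun u hu => ⟨lt_of_lt_of_le hs.1 hu.1, lt_of_le_of_lt hu.2 ht.2⟩
    have hmemIcc : ∀ u ∈ Set.Icc s t, u ∈ Set.Icc (-t₀) t :=
      fun u hu => ⟨(lt_of_lt_of_le hs.1 hu.1).le, hu.2⟩
    have hacontst : ContinuousOn a (Set.Icc s t) :=
      hacontt.mono (fun u hu => hmemIcc u hu)
    have ha'cont : ContinuousOn a' (Set.Icc s t) := by
      have h2 : ContinuousOn (fun u => Real.sqrt (F (a u))) (Set.Icc s t) := by
        apply Real.continuous_sqrt.comp_continuousOn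
        exact hFcont.comp hacontst (fun u hu => hapos u (hmem u hu))
      exact h2.congr (fun u hu => ha'eq u (hmem u hu))
    have himg : a '' Set.Icc s t ⊆ Set.Ioc 0 B := by
      rintro _ ⟨u, hu, rfl⟩
      refine ⟨hapos u (hmem u hu), ?_⟩
      exact hmono.monotoneOn (hmemIcc u hu) ⟨ht.1.le, le_rfl⟩ hu.2
    have hg : ContinuousOn f (a '' Set.Icc s t) := by
      apply ContinuousOn.rpow_const
      · exact hFcont.mono (fun x hx => (himg hx).1)
      · exact fun x hx => Or.inl (ne_of_gt (hFpos x (himg hx)))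
    have hsubs := intervalIntegral.integral_comp_smul_deriv'
      (f := a) (f' := a') (g := f) (a := s) (b := t)
      (fun u hu => hderiv u (hmem u (by rwa [hsub] at hu)))
      (by rw [hsub]; exact ha'cont)
      (by rw [hsub]; exact hg)
    rw [hB_def, ← hsubs]
    have hone : Set.EqOn (fun u => a' u • (f ∘ a) u) (fun _ => (1:ℝ)) (Set.uIcc s t) := by
      intro u hu
      rw [hsub] at hu
      have hu' := hmem u hu
      have h1 : 0 < a' u := ha'pos u hu'
      simp only [Function.comp, smul_eq_mul, hf_def]
      rw [← hODE u hu', ← Real.rpow_natCast (a' u) 2, ← Real.rpow_mul h1.le]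
      norm_num
      rw [Real.rpow_neg_one]
      field_simp
    rw [intervalIntegral.integral_congr hone]
    simp
  -- the approximating sequence
  have ht0 : 0 < t + t₀ := by linarith [ht.1]
  set s : ℕ → ℝ := fun n => -t₀ + (t + t₀) / (n + 2) with hs_def
  have hsmem : ∀ n, s n ∈ Set.Ioo (-t₀) t := by
    intro n
    constructor
    · have : 0 < (t + t₀) / (n + 2) := by positivity
      simp only [hs_def]; linarith
    · have h2 : (t + t₀) / ((n:ℝ) + 2) < t + t₀ := by
        rw [div_lt_iff₀ (by positivity)]
        nlinarith [Nat.cast_nonneg (α := ℝ) n]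
      simp only [hs_def]; linarith
  have hs_tendsto : Filter.Tendsto s Filter.atTop (nhds (-t₀)) := by
    have h1 : Filter.Tendsto (fun n : ℕ => (t + t₀) / ((n:ℝ) + 2)) Filter.atTop (nhds 0) := by
      apply Filter.Tendsto.div_atTop tendsto_const_nhds
      exact Filter.tendsto_atTop_add_const_right _ 2 tendsto_natCast_atTop_atTop
    have := tendsto_const_nhds (x := -t₀) (f := Filter.atTop (α := ℕ)).add h1
    simpa using this
  have has_tendsto : Filter.Tendsto (fun n => a (s n)) Filter.atTop (nhds 0) := by
    have hc : ContinuousWithinAt a (Set.Ico (-t₀) T) (-t₀) :=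
      hacont (-t₀) ⟨le_rfl, hT⟩
    have h1 : Filter.Tendsto s Filter.atTop (nhdsWithin (-t₀) (Set.Ico (-t₀) T)) := by
      apply tendsto_nhdsWithin_of_tendsto_nhds_of_eventually_within _ hs_tendsto
      exact Filter.Eventually.of_forall fun n =>
        ⟨(hsmem n).1.le, (hsmem n).2.trans ht.2⟩
    have := hc.tendsto.comp h1
    rwa [ha0] at this
  have haspos : ∀ n, 0 < a (s n) := fun n =>
    hapos _ ⟨(hsmem n).1, (hsmem n).2.trans ht.2⟩
  have hasle : ∀ n, a (s n) ≤ B := fun n =>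
    hmono.monotoneOn ⟨(hsmem n).1.le, (hsmem n).2.le⟩ ⟨ht.1.le, le_rfl⟩ (hsmem n).2.le
  -- integrability on each Ioc (a (s n)) B and the norm bound
  have hfi : ∀ n, MeasureTheory.IntegrableOn f (Set.Ioc (a (s n)) B) := by
    intro n
    have hsubset : Set.Icc (a (s n)) B ⊆ Set.Ioc 0 B :=
      fun x hx => ⟨lt_of_lt_of_le (haspos n) hx.1, hx.2⟩
    have hcont : ContinuousOn f (Set.Icc (a (s n)) B) := by
      apply ContinuousOn.rpow_const
      · exact hFcont.mono (fun x hx => (hsubset hx).1)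
      · exact fun x hx => Or.inl (ne_of_gt (hFpos x (hsubset hx)))
    exact (hcont.integrableOn_Icc).mono_set Set.Ioc_subset_Icc_self
  have hval : ∀ n, ∫ x in Set.Ioc (a (s n)) B, f x = t - s n := by
    intro n
    rw [← intervalIntegral.integral_of_le (hasle n)]
    exact key (s n) (hsmem n)
  have hnorm : ∀ n, ∫ x in Set.Ioc (a (s n)) B, ‖f x‖ = t - s n := by
    intro n
    rw [← hval n]
    apply MeasureTheory.setIntegral_congr_fun measurableSet_Ioc
    intro x hx
    have : 0 < F x := hFpos x ⟨lt_trans (haspos n) hx.1, hx.2⟩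
    exact Real.norm_of_nonneg (Real.rpow_nonneg this.le _)
  have hint : MeasureTheory.IntegrableOn f (Set.Ioc 0 B) := by
    apply MeasureTheory.integrableOn_Ioc_of_intervalIntegral_norm_bounded_left
      (I := t + t₀) (a := fun n => a (s n)) (b := B) (l := Filter.atTop)
      hfi has_tendsto
    apply Filter.Eventually.of_forall
    intro n
    rw [hnorm n]
    have := (hsmem n).1
    linarith
  refine ⟨hint, ?_⟩
  -- monotone union
  have hanti : ∀ m n : ℕ, m ≤ n → a (s n) ≤ a (s m) := by
    intro m n hmn
    apply hmono.monotoneOn ⟨(hsmem n).1.le, (hsmem n).2.le⟩ ⟨(hsmem m).1.le, (hsmem m).2.le⟩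
    simp only [hs_def]
    have h2 : (t + t₀) / ((n:ℝ) + 2) ≤ (t + t₀) / ((m:ℝ) + 2) := by
      apply div_le_div_of_nonneg_left ht0.le (by positivity)
      exact_mod_cast add_le_add_left (Nat.cast_le.mpr hmn) 2
    linarith
  have hmonoSet : Monotone (fun n => Set.Ioc (a (s n)) B) := by
    intro m n hmn
    exact Set.Ioc_subset_Ioc_left (hanti m n hmn)
  have hUnion : (⋃ n, Set.Ioc (a (s n)) B) = Set.Ioc 0 B := by
    apply Set.Subset.antisymm
    · apply Set.iUnion_subset
      intro n x hx
      exact ⟨lt_trans (haspos n) hx.1, hx.2⟩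
    · intro x hx
      have : ∀ᶠ n in Filter.atTop, a (s n) < x :=
        has_tendsto.eventually_lt_const hx.1
      obtain ⟨n, hn⟩ := this.exists
      exact Set.mem_iUnion.mpr ⟨n, hn, hx.2⟩
  have htend := MeasureTheory.tendsto_setIntegral_of_monotone
    (f := f) (μ := MeasureTheory.volume)
    (fun n => measurableSet_Ioc) hmonoSet (hUnion ▸ hint)
  rw [hUnion] at htend
  have htend2 : Filter.Tendsto (fun n => ∫ x in Set.Ioc (a (s n)) B, f x)
      Filter.atTop (nhds (t + t₀)) := by
    simp_rw [hval]
    have h1 : Filter.Tendsto (fun n => t - s n) Filter.atTop (nhds (t - (-t₀))) :=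
      (tendsto_const_nhds (x := t)).sub hs_tendsto
    simpa using h1
  have := tendsto_nhds_unique htend htend2
  rw [intervalIntegral.integral_of_le hB.le]
  exact this.symm
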